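/- For the curvature 2-form R_{ab} = k_a k_b α_c θ̃^c ∧ k♭ + 2 V_{c[a} k_{b]} θ̃^c ∧ k♭, where α_c and V_{ca} are transversal (V_{ca}k^a = V_{ca}l^a = 0 = V_{ca}k^c etc.), all contractions with k vanish: k^a R_{ab} = 0, k^b R_{ab} = 0, and moreover k♭ ∧ R_{ab} = 0 and R_{ab}(k, ·) = 0 (i.e. both generalized Lichnerowicz curvature conditions hold). -/
import Mathlib


/-- For the curvature 2-form `R_{ab} = k_a k_b α_c θ̃^c∧k♭ + 2V_{c[a}k_{b]} θ̃^c∧k♭`,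
all contractions with `k` vanish: `k^a R_{ab} = 0`, `k^b R_{ab} = 0`, and moreover
`k♭ ∧ R_{ab} = 0` and `R_{ab}(k,·) = 0` (both generalized Lichnerowicz conditions).
(`R a b x y` denotes the `(x,y)` 2-form component of `R_{ab}`.) -/
theorem stmt_18 {n : ℕ} (g ginv : Fin n → Fin n → ℝ)
    (hgs : ∀ a b, g a b = g b a)
    (hinv : ∀ a b, ∑ c, g a c * ginv c b = if a = b then 1 else 0)
    (k l : Fin n → ℝ)
    (hkk : ∑ a, ∑ b, ginv a b * k a * k b = 0)
    (hll : ∑ a, ∑ b, ginv a b * l a * l b = 0)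
    (hkl : ∑ a, ∑ b, ginv a b * k a * l b = 1)
    (kU lU : Fin n → ℝ)
    (hkU : ∀ a, kU a = ∑ b, ginv a b * k b)
    (hlU : ∀ a, lU a = ∑ b, ginv a b * l b)
    (θ : Fin n → Fin n → ℝ)                    -- transversal coframe θ̃^c
    (hθk : ∀ c, ∑ a, kU a * θ c a = 0)
    (hθl : ∀ c, ∑ a, lU a * θ c a = 0)
    (hkθ : ∀ x, ∑ c, k c * θ c x = 0)          -- k_c θ̃^c = 0
    (al : Fin n → ℝ) (hal : ∑ c, kU c * al c = 0)   -- α_c, k^c α_c = 0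
    (Vt : Fin n → Fin n → ℝ)                   -- V_{ca}, transversal
    (hV1 : ∀ a, ∑ c, kU c * Vt c a = 0) (hV2 : ∀ a, ∑ c, kU c * Vt a c = 0)
    (hV3 : ∀ a, ∑ c, lU c * Vt c a = 0) (hV4 : ∀ a, ∑ c, lU c * Vt a c = 0)
    (R : Fin n → Fin n → Fin n → Fin n → ℝ)
    (hR : ∀ a b x y, R a b x y =
      k a * k b * ∑ c, al c * (θ c x * k y - θ c y * k x) +
      ∑ c, (Vt c a * k b - Vt c b * k a) * (θ c x * k y - θ c y * k x)) :
    (∀ b x y, ∑ a, kU a * R a b x y = 0) ∧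
    (∀ a x y, ∑ b, kU b * R a b x y = 0) ∧
    (∀ a b x y z, k x * R a b y z + k y * R a b z x + k z * R a b x y = 0) ∧
    (∀ a b y, ∑ x, kU x * R a b x y = 0) := by
  have hkUk : ∑ a, kU a * k a = 0 := by
    have h : ∑ a, kU a * k a = ∑ a, ∑ b, ginv a b * k a * k b := by
      simp only [hkU, Finset.sum_mul]
      exact Finset.sum_congr rfl fun a _ => Finset.sum_congr rfl fun b _ => by ring
    rw [h, hkk]
  have hT0 : ∀ c y, ∑ x, kU x * (θ c x * k y - θ c y * k x) = 0 := by
    intro c y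
    have h : ∀ x, kU x * (θ c x * k y - θ c y * k x)
        = (kU x * θ c x) * k y - θ c y * (kU x * k x) := fun x => by ring
    rw [Finset.sum_congr rfl fun x _ => h x, Finset.sum_sub_distrib, ← Finset.sum_mul,
      ← Finset.mul_sum, hθk, hkUk, zero_mul, mul_zero, sub_zero]
  refine ⟨?_, ?_, ?_, ?_⟩
  · intro b x y
    have step : ∀ a, kU a * R a b x y =
        (kU a * k a) * (k b * ∑ c, al c * (θ c x * k y - θ c y * k x)) +
        ∑ c, ((kU a * Vt c a) * (k b * (θ c x * k y - θ c y * k x))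
              - (kU a * k a) * (Vt c b * (θ c x * k y - θ c y * k x))) := by
      intro a
      rw [hR, mul_add]
      congr 1
      · ring
      · rw [Finset.mul_sum]
        exact Finset.sum_congr rfl fun c _ => by ring
    rw [Finset.sum_congr rfl fun a _ => step a, Finset.sum_add_distrib, ← Finset.sum_mul,
      hkUk, zero_mul, Finset.sum_comm, zero_add]
    apply Finset.sum_eq_zero
    intro c _
    rw [Finset.sum_sub_distrib, ← Finset.sum_mul, ← Finset.sum_mul, hV2, hkUk, zero_mul,
      zero_mul, sub_zero]
  · intro a x y
    have step : ∀ b, kU b * R a b x y =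
        (kU b * k b) * (k a * ∑ c, al c * (θ c x * k y - θ c y * k x)) +
        ∑ c, ((kU b * k b) * (Vt c a * (θ c x * k y - θ c y * k x))
              - (kU b * Vt c b) * (k a * (θ c x * k y - θ c y * k x))) := by
      intro b
      rw [hR, mul_add]
      congr 1
      · ring
      · rw [Finset.mul_sum]
        exact Finset.sum_congr rfl fun c _ => by ring
    rw [Finset.sum_congr rfl fun b _ => step b, Finset.sum_add_distrib, ← Finset.sum_mul,
      hkUk, zero_mul, Finset.sum_comm, zero_add]
    apply Finset.sum_eq_zero
    intro c _
    rw [Finset.sum_sub_distrib, ← Finset.sum_mul, ← Finset.sum_mul, hV2, hkUk, zero_mul,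
      zero_mul, sub_zero]
  · intro a b x y z
    have T : ∀ f : Fin n → ℝ,
        k x * ∑ c, f c * (θ c y * k z - θ c z * k y)
        + k y * ∑ c, f c * (θ c z * k x - θ c x * k z)
        + k z * ∑ c, f c * (θ c x * k y - θ c y * k x) = 0 := by
      intro f
      simp only [Finset.mul_sum, ← Finset.sum_add_distrib]
      exact Finset.sum_eq_zero fun c _ => by ring
    rw [hR a b y z, hR a b z x, hR a b x y]
    linear_combination (k a * k b) * T al + T (fun c => Vt c a * k b - Vt c b * k a)
  · intro a b y
    have step : ∀ x, kU x * R a b x y =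
        ∑ c, (k a * k b * al c + (Vt c a * k b - Vt c b * k a))
          * (kU x * (θ c x * k y - θ c y * k x)) := by
      intro x
      rw [hR, mul_add]
      simp only [Finset.mul_sum]
      rw [← Finset.sum_add_distrib]
      exact Finset.sum_congr rfl fun c _ => by ring
    rw [Finset.sum_congr rfl fun x _ => step x, Finset.sum_comm]
    exact Finset.sum_eq_zero fun c _ => by rw [← Finset.mul_sum, hT0, mul_zero]
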